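/- Let 1 < p < ∞, let X be a Banach space, and let T : L_p → X be a bounded ℓ₂-strictly singular linear operator. Then for every ε > 0 and every δ > 0 there exist N ∈ ℕ and real numbers b_1, …, b_N with max_{1 ≤ n ≤ N} |b_n| ≤ ε such that the function f = Σ_{n=1}^N b_n r_n satisfies ‖f‖_p = 1 and ‖Tf‖ < δ. -/

import Mathlib

open MeasureTheory Set Filter Topology
open scoped ENNReal NNReal

/-- Lebesgue measure on `[0,1]`. -/
noncomputable def μ01 : Measure ℝ := volume.restrict (Set.Icc 0 1)

/-- The Rademacher functions `r_n(t) = (-1)^⌊2^n t⌋`. -/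
noncomputable def rademacher (n : ℕ) (t : ℝ) : ℝ := (-1 : ℝ) ^ ⌊(2:ℝ) ^ n * t⌋

/-- `T` is `ℓ₂`-strictly singular: there is no closed subspace of `L_p` linearly
homeomorphic to `ℓ₂` on whose unit sphere `‖T ⬝‖` is bounded away from zero. -/
def IsL2StrictlySingular {X : Type*} [NormedAddCommGroup X] [NormedSpace ℝ X]
    {p : ℝ≥0∞} [Fact (1 ≤ p)] (T : Lp ℝ p μ01 →L[ℝ] X) : Prop :=
  ¬ ∃ Y : Submodule ℝ (Lp ℝ p μ01), IsClosed (Y : Set (Lp ℝ p μ01)) ∧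
      Nonempty (lp (fun _ : ℕ => ℝ) 2 ≃L[ℝ] Y) ∧
      ∃ c : ℝ, 0 < c ∧ ∀ y ∈ Y, ‖y‖ = 1 → c ≤ ‖T y‖

set_option synthInstance.maxHeartbeats 1000000
set_option maxHeartbeats 2000000

namespace RadAux


instance : IsProbabilityMeasure μ01 :=
  ⟨by simp [μ01, Real.volume_Icc]⟩

lemma measurable_rademacher (n : ℕ) : Measurable (rademacher n) := by
  have h1 : Measurable fun t : ℝ => ⌊(2:ℝ) ^ n * t⌋ :=
    Int.measurable_floor.comp (measurable_const.mul measurable_id)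
  exact (measurable_from_top (f := fun z : ℤ => (-1 : ℝ) ^ z)).comp h1

lemma abs_rademacher (n : ℕ) (t : ℝ) : |rademacher n t| = 1 := by
  rw [rademacher]
  rcases Int.even_or_odd ⌊(2:ℝ) ^ n * t⌋ with h | h
  · rw [h.neg_one_zpow]; norm_num
  · rw [h.neg_one_zpow]; norm_num

/-- Sum over `range (2*M)` split into even/odd. -/
lemma sum_range_two_mul (M : ℕ) (f : ℕ → ℝ) :
    ∑ k ∈ Finset.range (2 * M), f k
      = ∑ q ∈ Finset.range M, (f (2*q) + f (2*q+1)) := by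
  induction M with
  | zero => simp
  | succ M ih =>
    have h : 2 * (M+1) = (2*M + 1) + 1 := by ring
    rw [h, Finset.sum_range_succ, Finset.sum_range_succ, ih, Finset.sum_range_succ]
    rw [add_assoc]

/-- Discrete master product lemma: expectation of a product of functions of
distinct binary digits factorizes. -/
lemma DM (F : ℕ → ℕ → ℝ) (N : ℕ) (S : Finset ℕ) (hS : ∀ n ∈ S, 1 ≤ n ∧ n ≤ N) :
    ∑ k ∈ Finset.range (2^N), ∏ n ∈ S, F n (k / 2^(N-n) % 2)
      = 2^(N - S.card) * ∏ n ∈ S, (F n 0 + F n 1) := by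
  induction N generalizing S with
  | zero =>
    have hSe : S = ∅ := by
      rw [Finset.eq_empty_iff_forall_notMem]
      intro n hn
      have := hS n hn; omega
    subst hSe; simp
  | succ N ih =>
    have h2 : (2:ℕ)^(N+1) = 2 * 2^N := by ring
    rw [h2, sum_range_two_mul]
    have key : ∀ q : ℕ, ∀ r : ℕ, r < 2 →
        ∏ n ∈ S, F n ((2*q+r) / 2^(N+1-n) % 2)
          = (if N+1 ∈ S then F (N+1) r else 1)
            * ∏ n ∈ S.erase (N+1), F n (q / 2^(N-n) % 2) := by
      intro q r hr
      have hbit : ∀ n ∈ S.erase (N+1),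
          F n ((2*q+r) / 2^(N+1-n) % 2) = F n (q / 2^(N-n) % 2) := by
        intro n hn
        have hne : n ≠ N+1 := Finset.ne_of_mem_erase hn
        have hnS : n ∈ S := Finset.mem_of_mem_erase hn
        have hle : n ≤ N := by have := hS n hnS; omega
        have hexp : N + 1 - n = (N - n) + 1 := by omega
        have hdiv : (2*q+r) / 2^(N+1-n) = q / 2^(N-n) := by
          have h22 : (2*q+r)/2 = q := by
            rw [Nat.mul_add_div (by norm_num)]; omega
          rw [hexp, pow_succ', ← Nat.div_div_eq_div_mul, h22]
        rw [hdiv]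
      by_cases hmem : N+1 ∈ S
      · rw [← Finset.mul_prod_erase S _ hmem, if_pos hmem]
        have hNbit : (2*q+r) / 2^(N+1-(N+1)) % 2 = r := by
          simp [Nat.mul_add_mod]
          omega
        rw [hNbit]
        congr 1
        exact Finset.prod_congr rfl hbit
      · rw [if_neg hmem, one_mul]
        rw [Finset.erase_eq_of_notMem hmem]
        exact Finset.prod_congr rfl
          (fun n hn => hbit n (by rwa [Finset.erase_eq_of_notMem hmem]))
    have hS' : ∀ n ∈ S.erase (N+1), 1 ≤ n ∧ n ≤ N := by
      intro n hn
      have := hS n (Finset.mem_of_mem_erase hn)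
      have := Finset.ne_of_mem_erase hn
      omega
    calc ∑ q ∈ Finset.range (2^N),
          (∏ n ∈ S, F n ((2*q) / 2^(N+1-n) % 2) + ∏ n ∈ S, F n ((2*q+1) / 2^(N+1-n) % 2))
        = ∑ q ∈ Finset.range (2^N),
            ((if N+1 ∈ S then F (N+1) 0 else 1) + (if N+1 ∈ S then F (N+1) 1 else 1))
              * ∏ n ∈ S.erase (N+1), F n (q / 2^(N-n) % 2) := by
          refine Finset.sum_congr rfl fun q _ => ?_
          have k0 := key q 0 (by norm_num)
          have k1 := key q 1 (by norm_num)
          simp only [Nat.add_zero] at k0 ⊢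
          rw [k0, k1]; ring
      _ = ((if N+1 ∈ S then F (N+1) 0 else 1) + (if N+1 ∈ S then F (N+1) 1 else 1))
            * (2^(N - (S.erase (N+1)).card) * ∏ n ∈ S.erase (N+1), (F n 0 + F n 1)) := by
          rw [← Finset.mul_sum, ih _ hS']
      _ = 2^(N+1 - S.card) * ∏ n ∈ S, (F n 0 + F n 1) := by
          by_cases hmem : N+1 ∈ S
          · rw [if_pos hmem, if_pos hmem, ← Finset.mul_prod_erase S _ hmem,
              Finset.card_erase_of_mem hmem]
            have hcard : 1 ≤ S.card := Finset.card_pos.mpr ⟨_, hmem⟩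
            have hcle : S.card ≤ N + 1 := by
              have : S ⊆ Finset.Icc 1 (N+1) := fun n hn => Finset.mem_Icc.mpr (hS n hn)
              simpa using Finset.card_le_card this
            have : N - (S.card - 1) = N + 1 - S.card := by omega
            rw [this]; ring
          · rw [if_neg hmem, if_neg hmem, Finset.erase_eq_of_notMem hmem]
            have hcle : S.card ≤ N := by
              have hsub : S ⊆ Finset.Icc 1 N := by
                intro n hn
                have h1 := hS n hn
                have h2 : n ≠ N+1 := fun h => hmem (h ▸ hn)
                exact Finset.mem_Icc.mpr (by omega)
              simpa using Finset.card_le_card hsub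
            have : N + 1 - S.card = (N - S.card) + 1 := by omega
            rw [this]; ring



/-- The sign of the `(N-n)`-th binary digit of `k`. -/
noncomputable def rho (N n k : ℕ) : ℝ := (-1 : ℝ)^(k / 2^(N-n))

lemma rho_mul_self (N n k : ℕ) : rho N n k * rho N n k = 1 := by
  rw [rho, ← pow_add]
  exact Even.neg_one_pow ⟨_, rfl⟩

lemma abs_rho (N n k : ℕ) : |rho N n k| = 1 := by
  rw [rho, abs_pow, abs_neg, abs_one, one_pow]

lemma card_le_of_mem_Icc {S : Finset ℕ} {N : ℕ} (hS : ∀ n ∈ S, 1 ≤ n ∧ n ≤ N) :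
    S.card ≤ N := by
  have hsub : S ⊆ Finset.Icc 1 N := fun n hn => Finset.mem_Icc.mpr (hS n hn)
  simpa using Finset.card_le_card hsub

lemma ortho {N n n' : ℕ} (h1 : 1 ≤ n) (h2 : n ≤ N) (h1' : 1 ≤ n') (h2' : n' ≤ N) :
    ∑ k ∈ Finset.range (2^N), rho N n k * rho N n' k
      = if n = n' then (2^N : ℝ) else 0 := by
  by_cases h : n = n'
  · subst h
    rw [if_pos rfl, Finset.sum_congr rfl fun k _ => rho_mul_self N n k]
    simp
  · rw [if_neg h]
    have hrw : ∀ k, rho N n k * rho N n' k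
        = ∏ m ∈ ({n, n'} : Finset ℕ), (fun m x => (-1:ℝ)^x) m (k / 2^(N-m) % 2) := by
      intro k
      rw [Finset.prod_pair h]
      simp only [rho]
      rw [neg_one_pow_eq_pow_mod_two, neg_one_pow_eq_pow_mod_two (n := k / 2^(N-n'))]
    rw [Finset.sum_congr rfl fun k _ => hrw k, DM]
    · norm_num
    · intro m hm
      rcases Finset.mem_insert.mp hm with rfl | hm
      · exact ⟨h1, h2⟩
      · rcases Finset.mem_singleton.mp hm with rfl
        exact ⟨h1', h2'⟩

lemma sum_sq {N : ℕ} {S : Finset ℕ} (hS : ∀ n ∈ S, 1 ≤ n ∧ n ≤ N) (b : ℕ → ℝ) :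
    ∑ k ∈ Finset.range (2^N), (∑ n ∈ S, b n * rho N n k)^2
      = 2^N * ∑ n ∈ S, (b n)^2 := by
  have expand : ∀ k, (∑ n ∈ S, b n * rho N n k)^2
      = ∑ n ∈ S, ∑ n' ∈ S, b n * b n' * (rho N n k * rho N n' k) := by
    intro k
    rw [sq, Finset.sum_mul_sum]
    exact Finset.sum_congr rfl fun n _ => Finset.sum_congr rfl fun n' _ => by ring
  rw [Finset.sum_congr rfl fun k _ => expand k]
  rw [Finset.sum_comm]
  have inner : ∀ n ∈ S,
      ∑ k ∈ Finset.range (2^N), ∑ n' ∈ S, b n * b n' * (rho N n k * rho N n' k)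
        = 2^N * (b n)^2 := by
    intro n hn
    rw [Finset.sum_comm]
    have h1 : ∀ n' ∈ S,
        ∑ k ∈ Finset.range (2^N), b n * b n' * (rho N n k * rho N n' k)
          = b n * b n' * (if n = n' then (2^N:ℝ) else 0) := by
      intro n' hn'
      rw [← Finset.mul_sum, ortho (hS n hn).1 (hS n hn).2 (hS n' hn').1 (hS n' hn').2]
    rw [Finset.sum_congr rfl h1]
    rw [Finset.sum_congr rfl (fun n' _ => by rw [mul_ite, mul_zero])]
    rw [Finset.sum_ite_eq S n (fun n' => b n * b n' * 2^N), if_pos hn]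
    ring
  rw [Finset.sum_congr rfl inner, ← Finset.mul_sum]

lemma mgf {N : ℕ} {S : Finset ℕ} (hS : ∀ n ∈ S, 1 ≤ n ∧ n ≤ N) (c : ℕ → ℝ) :
    ∑ k ∈ Finset.range (2^N), Real.exp (∑ n ∈ S, c n * rho N n k)
      = 2^(N - S.card) * ∏ n ∈ S, (Real.exp (c n) + Real.exp (-c n)) := by
  have hrw : ∀ k, Real.exp (∑ n ∈ S, c n * rho N n k)
      = ∏ n ∈ S, (fun n x => Real.exp (c n * (-1:ℝ)^x)) n (k / 2^(N-n) % 2) := by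
    intro k
    rw [Real.exp_sum]
    exact Finset.prod_congr rfl fun n _ => by
      rw [rho, neg_one_pow_eq_pow_mod_two]
  rw [Finset.sum_congr rfl fun k _ => hrw k,
    DM (fun n x => Real.exp (c n * (-1:ℝ)^x)) N S hS]
  congr 1
  exact Finset.prod_congr rfl fun n _ => by norm_num

lemma exp_half_lt_two : Real.exp (1/2 : ℝ) < 2 := by
  have h1 : Real.exp (1/2 : ℝ) * Real.exp (1/2 : ℝ) = Real.exp 1 := by
    rw [← Real.exp_add]; norm_num
  have h2 := Real.exp_one_lt_d9
  have h3 := Real.exp_pos (1/2 : ℝ)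
  nlinarith

lemma mgf_le {N : ℕ} {S : Finset ℕ} (hS : ∀ n ∈ S, 1 ≤ n ∧ n ≤ N) (c : ℕ → ℝ)
    (hc : ∑ n ∈ S, (c n)^2 ≤ 1) :
    ∑ k ∈ Finset.range (2^N), Real.exp (∑ n ∈ S, c n * rho N n k) ≤ 2^N * 2 := by
  rw [mgf hS c]
  have hcard := card_le_of_mem_Icc hS
  have hterm : ∀ n ∈ S, Real.exp (c n) + Real.exp (-c n) ≤ 2 * Real.exp ((c n)^2/2) := by
    intro n _
    have h1 : Real.exp (c n) + Real.exp (-c n) = 2 * Real.cosh (c n) := by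
      rw [Real.cosh_eq]; ring
    rw [h1]
    have := Real.cosh_le_exp_half_sq (c n)
    linarith
  have hprod : ∏ n ∈ S, (Real.exp (c n) + Real.exp (-c n))
      ≤ ∏ n ∈ S, 2 * Real.exp ((c n)^2/2) := by
    refine Finset.prod_le_prod (fun n _ => by positivity) hterm
  have hprod2 : ∏ n ∈ S, 2 * Real.exp ((c n)^2/2)
      = 2^S.card * Real.exp ((∑ n ∈ S, (c n)^2)/2) := by
    rw [Finset.prod_mul_distrib, Finset.prod_const, ← Real.exp_sum, ← Finset.sum_div]
  have hexp : Real.exp ((∑ n ∈ S, (c n)^2)/2) ≤ 2 := by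
    calc Real.exp ((∑ n ∈ S, (c n)^2)/2) ≤ Real.exp (1/2) := by
          apply Real.exp_le_exp.mpr; linarith
      _ ≤ 2 := exp_half_lt_two.le
  have hpow : (2:ℝ)^(N - S.card) * 2^S.card = 2^N := by
    rw [← pow_add]
    congr 1
    omega
  calc 2^(N - S.card) * ∏ n ∈ S, (Real.exp (c n) + Real.exp (-c n))
      ≤ 2^(N - S.card) * (2^S.card * Real.exp ((∑ n ∈ S, (c n)^2)/2)) := by
        rw [hprod2] at hprod
        exact mul_le_mul_of_nonneg_left hprod (by positivity)
    _ = 2^N * Real.exp ((∑ n ∈ S, (c n)^2)/2) := by rw [← mul_assoc, hpow]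
    _ ≤ 2^N * 2 := mul_le_mul_of_nonneg_left hexp (by positivity)


lemma moment_le {N : ℕ} {S : Finset ℕ} (hS : ∀ n ∈ S, 1 ≤ n ∧ n ≤ N) (b : ℕ → ℝ)
    (m : ℕ) (hm : 1 ≤ m) :
    ∑ k ∈ Finset.range (2^N), |∑ n ∈ S, b n * rho N n k|^(2*m)
      ≤ 2^N * (4 * (2*m).factorial) * (∑ n ∈ S, (b n)^2)^m := by
  set φ : ℕ → ℝ := fun k => ∑ n ∈ S, b n * rho N n k with hφ
  set σ2 : ℝ := ∑ n ∈ S, (b n)^2 with hσ2def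
  have hσ2 : 0 ≤ σ2 := Finset.sum_nonneg fun n _ => sq_nonneg _
  rcases eq_or_lt_of_le hσ2 with hz | hσ2pos
  · -- all coefficients vanish
    have hb : ∀ n ∈ S, b n = 0 := by
      intro n hn
      have := (Finset.sum_eq_zero_iff_of_nonneg (fun n _ => sq_nonneg (b n))).mp hz.symm n hn
      exact (pow_eq_zero_iff two_ne_zero).mp this
    have hφ0 : ∀ k, φ k = 0 := fun k =>
      Finset.sum_eq_zero fun n hn => by rw [hb n hn, zero_mul]
    have : ∀ k ∈ Finset.range (2^N), |φ k|^(2*m) = 0 := by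
      intro k _
      rw [hφ0 k, abs_zero]
      exact zero_pow (by omega)
    rw [Finset.sum_congr rfl this]
    simp only [Finset.sum_const_zero]
    positivity
  · set s : ℝ := Real.sqrt σ2 with hsdef
    have hs : 0 < s := Real.sqrt_pos.mpr hσ2pos
    have hs2 : s^2 = σ2 := Real.sq_sqrt hσ2
    -- pointwise bound
    have hpt : ∀ k, |φ k|^(2*m)
        ≤ (2*m).factorial * σ2^m
          * (Real.exp (φ k * s⁻¹) + Real.exp (-(φ k * s⁻¹))) := by
      intro k
      set x : ℝ := φ k * s⁻¹ with hxdef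
      have habs : |φ k| = |x| * s := by
        rw [hxdef, abs_mul, abs_inv, abs_of_pos hs]
        field_simp
      have h1 : |x|^(2*m) ≤ (2*m).factorial * Real.exp |x| := by
        have := Real.pow_div_factorial_le_exp (hx := abs_nonneg x) (n := 2*m)
        have hfac : (0:ℝ) < (2*m).factorial := by positivity
        rw [div_le_iff₀ hfac] at this
        linarith [this]
      have h2 : Real.exp |x| ≤ Real.exp x + Real.exp (-x) := by
        rcases abs_cases x with ⟨h, _⟩ | ⟨h, _⟩
        · rw [h]; linarith [Real.exp_pos (-x)]
        · rw [h]; linarith [Real.exp_pos x]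
      calc |φ k|^(2*m) = |x|^(2*m) * σ2^m := by
            rw [habs, mul_pow, ← hs2, ← pow_mul, mul_comm 2 m]
        _ ≤ ((2*m).factorial * Real.exp |x|) * σ2^m := by
            apply mul_le_mul_of_nonneg_right h1 (by positivity)
        _ = (2*m).factorial * σ2^m * Real.exp |x| := by ring
        _ ≤ (2*m).factorial * σ2^m * (Real.exp x + Real.exp (-x)) :=
            mul_le_mul_of_nonneg_left h2 (by positivity)
    -- sum the two mgf's
    have hc1 : ∑ n ∈ S, (b n * s⁻¹)^2 ≤ 1 := by
      have : ∑ n ∈ S, (b n * s⁻¹)^2 = σ2 * (s⁻¹)^2 := by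
        rw [hσ2def, Finset.sum_mul]
        exact Finset.sum_congr rfl fun n _ => by ring
      rw [this, ← hs2]
      field_simp
      exact le_rfl
    have hc2 : ∑ n ∈ S, (-(b n * s⁻¹))^2 ≤ 1 := by
      simpa using hc1
    have hsum1 : ∑ k ∈ Finset.range (2^N), Real.exp (φ k * s⁻¹) ≤ 2^N * 2 := by
      have hrw : ∀ k, φ k * s⁻¹ = ∑ n ∈ S, (b n * s⁻¹) * rho N n k := by
        intro k
        rw [hφ, Finset.sum_mul]
        exact Finset.sum_congr rfl fun n _ => by ring
      rw [Finset.sum_congr rfl fun k _ => by rw [hrw k]]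
      exact mgf_le hS _ hc1
    have hsum2 : ∑ k ∈ Finset.range (2^N), Real.exp (-(φ k * s⁻¹)) ≤ 2^N * 2 := by
      have hrw : ∀ k, -(φ k * s⁻¹) = ∑ n ∈ S, (-(b n * s⁻¹)) * rho N n k := by
        intro k
        rw [hφ, Finset.sum_mul, ← Finset.sum_neg_distrib]
        exact Finset.sum_congr rfl fun n _ => by ring
      rw [Finset.sum_congr rfl fun k _ => by rw [hrw k]]
      exact mgf_le hS _ hc2
    calc ∑ k ∈ Finset.range (2^N), |φ k|^(2*m)
        ≤ ∑ k ∈ Finset.range (2^N),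
            (2*m).factorial * σ2^m * (Real.exp (φ k * s⁻¹) + Real.exp (-(φ k * s⁻¹))) := by
          exact Finset.sum_le_sum fun k _ => hpt k
      _ = (2*m).factorial * σ2^m *
            (∑ k ∈ Finset.range (2^N), Real.exp (φ k * s⁻¹)
              + ∑ k ∈ Finset.range (2^N), Real.exp (-(φ k * s⁻¹))) := by
          rw [← Finset.mul_sum, Finset.sum_add_distrib]
      _ ≤ (2*m).factorial * σ2^m * (2^N * 2 + 2^N * 2) := by
          apply mul_le_mul_of_nonneg_left (by linarith) (by positivity)
      _ = 2^N * (4 * (2*m).factorial) * σ2^m := by ring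

lemma abs_lower {N : ℕ} {S : Finset ℕ} (hS : ∀ n ∈ S, 1 ≤ n ∧ n ≤ N) (b : ℕ → ℝ) :
    (2^N : ℝ) * Real.sqrt (∑ n ∈ S, (b n)^2) / 10
      ≤ ∑ k ∈ Finset.range (2^N), |∑ n ∈ S, b n * rho N n k| := by
  set φ : ℕ → ℝ := fun k => ∑ n ∈ S, b n * rho N n k with hφ
  set σ2 : ℝ := ∑ n ∈ S, (b n)^2 with hσ2def
  have hσ2 : 0 ≤ σ2 := Finset.sum_nonneg fun n _ => sq_nonneg _
  set A : ℝ := ∑ k ∈ Finset.range (2^N), |φ k| with hA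
  set B : ℝ := ∑ k ∈ Finset.range (2^N), (φ k)^2 with hBdef
  set C : ℝ := ∑ k ∈ Finset.range (2^N), |φ k|^3 with hC
  set D : ℝ := ∑ k ∈ Finset.range (2^N), |φ k|^(2*2) with hD
  have hAnn : 0 ≤ A := Finset.sum_nonneg fun k _ => abs_nonneg _
  have hCnn : 0 ≤ C := Finset.sum_nonneg fun k _ => by positivity
  have hDnn : 0 ≤ D := Finset.sum_nonneg fun k _ => by positivity
  rcases eq_or_lt_of_le hσ2 with hz | hσ2pos
  · rw [← hz, Real.sqrt_zero]
    simpa using hAnn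
  · have hB : B = 2^N * σ2 := sum_sq hS b
    have hBpos : 0 < B := by
      rw [hB]; positivity
    have hDbound : D ≤ 2^N * 96 * σ2^2 := by
      have h := moment_le hS b 2 (by norm_num)
      rw [hD]
      calc ∑ k ∈ Finset.range (2^N), |φ k|^(2*2)
          ≤ 2^N * (4 * (2*2).factorial) * σ2^2 := h
        _ = 2^N * 96 * σ2^2 := by norm_num [Nat.factorial]
    have CS1 : B^2 ≤ A * C := by
      have h := Finset.sum_mul_sq_le_sq_mul_sq (Finset.range (2^N))
        (fun k => Real.sqrt |φ k|) (fun k => |φ k| * Real.sqrt |φ k|)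
      have e1 : ∑ k ∈ Finset.range (2^N),
          Real.sqrt |φ k| * (|φ k| * Real.sqrt |φ k|) = B := by
        rw [hBdef]
        refine Finset.sum_congr rfl fun k _ => ?_
        rw [← sq_abs]
        have := Real.mul_self_sqrt (abs_nonneg (φ k))
        nlinarith [this]
      have e2 : ∑ k ∈ Finset.range (2^N), Real.sqrt |φ k| ^ 2 = A := by
        rw [hA]
        exact Finset.sum_congr rfl fun k _ => Real.sq_sqrt (abs_nonneg _)
      have e3 : ∑ k ∈ Finset.range (2^N), (|φ k| * Real.sqrt |φ k|)^2 = C := by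
        rw [hC]
        refine Finset.sum_congr rfl fun k _ => ?_
        rw [mul_pow, Real.sq_sqrt (abs_nonneg _)]
        ring
      rw [e1, e2, e3] at h
      exact h
    have CS2 : C^2 ≤ B * D := by
      have h := Finset.sum_mul_sq_le_sq_mul_sq (Finset.range (2^N))
        (fun k => |φ k|) (fun k => (φ k)^2)
      have e1 : ∑ k ∈ Finset.range (2^N), |φ k| * (φ k)^2 = C := by
        rw [hC]
        refine Finset.sum_congr rfl fun k _ => ?_
        rw [← sq_abs]; ring
      have e2 : ∑ k ∈ Finset.range (2^N), (|φ k|)^2 = B := by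
        rw [hBdef]
        exact Finset.sum_congr rfl fun k _ => sq_abs _
      have e3 : ∑ k ∈ Finset.range (2^N), ((φ k)^2)^2 = D := by
        rw [hD]
        refine Finset.sum_congr rfl fun k _ => ?_
        rw [← abs_pow, abs_of_nonneg (show (0:ℝ) ≤ φ k ^ (2*2) by rw [show 2*2=4 from rfl]; positivity)]
        ring
      rw [e1, e2, e3] at h
      exact h
    have hD0 : 0 < D := by
      rcases eq_or_lt_of_le hDnn with h0 | h
      · exfalso
        rw [← h0] at CS2
        have hC2 : C^2 ≤ 0 := by nlinarith
        have hC0 : C = 0 := by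
          have : C^2 = 0 := le_antisymm hC2 (sq_nonneg C)
          exact (pow_eq_zero_iff two_ne_zero).mp this
        rw [hC0] at CS1
        nlinarith
      · exact h
    have hBA : B^3 ≤ A^2 * D := by
      have h1 : B^4 ≤ A^2 * C^2 := by nlinarith [mul_nonneg hAnn hCnn]
      have h2 : A^2 * C^2 ≤ A^2 * (B * D) := mul_le_mul_of_nonneg_left CS2 (sq_nonneg A)
      have h3 : B * B^3 ≤ B * (A^2 * D) := by nlinarith
      exact le_of_mul_le_mul_left h3 hBpos
    set τ : ℝ := 2^N * Real.sqrt σ2 / 10 with hτ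
    have hτnn : 0 ≤ τ := by positivity
    have hτ2 : τ^2 = (2^N:ℝ)^2 * σ2 / 100 := by
      rw [hτ, div_pow, mul_pow, Real.sq_sqrt hσ2]
      norm_num
    have hτD : τ^2 * D ≤ B^3 := by
      have hstep : τ^2 * D ≤ ((2^N:ℝ)^2 * σ2 / 100) * (2^N * 96 * σ2^2) := by
        rw [hτ2]
        apply mul_le_mul_of_nonneg_left hDbound (by positivity)
      have heq : ((2^N:ℝ)^2 * σ2 / 100) * (2^N * 96 * σ2^2)
          = (96/100) * ((2^N:ℝ)^3 * σ2^3) := by ring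
      have hB3 : B^3 = (2^N:ℝ)^3 * σ2^3 := by rw [hB]; ring
      have hpos : (0:ℝ) ≤ (2^N:ℝ)^3 * σ2^3 := by positivity
      rw [heq] at hstep
      rw [hB3]
      linarith
    have hτA : τ^2 ≤ A^2 := by
      have : τ^2 * D ≤ A^2 * D := le_trans hτD hBA
      exact le_of_mul_le_mul_right this hD0
    calc τ = Real.sqrt (τ^2) := (Real.sqrt_sq hτnn).symm
      _ ≤ Real.sqrt (A^2) := Real.sqrt_le_sqrt hτA
      _ = A := Real.sqrt_sq hAnn



lemma rad_on_dyadic {N n k : ℕ} (hk : k < 2^N) (hn : n ≤ N) {t : ℝ}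
    (ht : t ∈ Set.Ico ((k:ℝ)/2^N) (((k:ℝ)+1)/2^N)) :
    rademacher n t = rho N n k := by
  set j := N - n with hj
  have hNnj : N = n + j := by omega
  have hN2 : (2:ℝ)^N = 2^n * 2^j := by rw [← pow_add]; congr 1
  have h2n : (0:ℝ) < 2^n := by positivity
  have h2j : (0:ℝ) < 2^j := by positivity
  have h2N : (0:ℝ) < 2^N := by positivity
  set q := k / 2^j with hq
  have hfloor : ⌊(2:ℝ)^n * t⌋ = (q : ℤ) := by
    rw [Int.floor_eq_iff]
    constructor
    · have h1 : (q : ℝ) * 2^j ≤ (k : ℝ) := by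
        exact_mod_cast Nat.cast_le.mpr (Nat.div_mul_le_self k (2^j))
      have h2 : (q:ℝ) ≤ (k:ℝ)/2^j := (le_div_iff₀ h2j).mpr h1
      have h3 : (k:ℝ)/2^j = 2^n * ((k:ℝ)/2^N) := by
        rw [hN2]; field_simp
      have h4 : 2^n * ((k:ℝ)/2^N) ≤ 2^n * t :=
        mul_le_mul_of_nonneg_left ht.1 (le_of_lt h2n)
      push_cast
      linarith
    · have h1 : (k:ℕ) + 1 ≤ (q + 1) * 2^j := by
        have hdm : 2^j * q + k % 2^j = k := Nat.div_add_mod k (2^j)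
        have hmod := Nat.mod_lt k (show 0 < 2^j by positivity)
        have heq : (q+1) * 2^j = 2^j * q + 2^j := by ring
        omega
      have h1' : (k:ℝ) + 1 ≤ ((q:ℝ) + 1) * 2^j := by exact_mod_cast h1
      have h2 : ((k:ℝ)+1)/2^j ≤ (q:ℝ) + 1 := (div_le_iff₀ h2j).mpr h1'
      have h3 : 2^n * (((k:ℝ)+1)/2^N) = ((k:ℝ)+1)/2^j := by
        rw [hN2]; field_simp
      have h4 : 2^n * t < 2^n * (((k:ℝ)+1)/2^N) :=
        mul_lt_mul_of_pos_left ht.2 h2n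
      push_cast
      linarith
  rw [rademacher, hfloor, rho, zpow_natCast]

lemma Ico_eq_biUnion (N : ℕ) :
    Set.Ico (0:ℝ) 1
      = ⋃ k ∈ Finset.range (2^N), Set.Ico ((k:ℝ)/2^N) (((k:ℝ)+1)/2^N) := by
  have h2N : (0:ℝ) < 2^N := by positivity
  ext t
  simp only [Set.mem_Ico, Set.mem_iUnion, Finset.mem_range]
  constructor
  · rintro ⟨h0, h1⟩
    have hnn : 0 ≤ (2:ℝ)^N * t := by positivity
    refine ⟨⌊(2:ℝ)^N * t⌋₊, ?_, ?_, ?_⟩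
    · rw [Nat.floor_lt hnn]
      calc (2:ℝ)^N * t < 2^N * 1 := by
            exact mul_lt_mul_of_pos_left h1 h2N
        _ = ((2^N : ℕ) : ℝ) := by push_cast; ring
    · rw [div_le_iff₀ h2N]
      have := Nat.floor_le hnn
      linarith
    · rw [lt_div_iff₀ h2N]
      have := Nat.lt_floor_add_one ((2:ℝ)^N * t)
      linarith
  · rintro ⟨k, hk, hk1, hk2⟩
    constructor
    · have : (0:ℝ) ≤ (k:ℝ)/2^N := by positivity
      linarith
    · have hkr : (k:ℝ) + 1 ≤ (2:ℝ)^N := by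
        have : (k:ℕ) + 1 ≤ 2^N := hk
        exact_mod_cast this
      have : ((k:ℝ)+1)/2^N ≤ 1 := by
        rw [div_le_one h2N]; linarith
      linarith

lemma dyadic_formula (N : ℕ) (S : Finset ℕ) (hS : ∀ n ∈ S, 1 ≤ n ∧ n ≤ N)
    (b : ℕ → ℝ) (G : ℝ → ℝ) :
    ∫ t, G (∑ n ∈ S, b n * rademacher n t) ∂μ01
      = (2^N : ℝ)⁻¹ * ∑ k ∈ Finset.range (2^N), G (∑ n ∈ S, b n * rho N n k) := by
  have h2N : (0:ℝ) < 2^N := by positivity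
  have key : ∀ k ∈ Finset.range (2^N),
      Set.EqOn (fun t => G (∑ n ∈ S, b n * rademacher n t))
        (fun _ => G (∑ n ∈ S, b n * rho N n k))
        (Set.Ico ((k:ℝ)/2^N) (((k:ℝ)+1)/2^N)) := by
    intro k hk t ht
    simp only
    congr 1
    refine Finset.sum_congr rfl fun n hn => ?_
    rw [rad_on_dyadic (Finset.mem_range.mp hk) (hS n hn).2 ht]
  have hvol : ∀ k : ℕ, volume (Set.Ico ((k:ℝ)/2^N) (((k:ℝ)+1)/2^N))
      = ENNReal.ofReal ((2^N:ℝ)⁻¹) := by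
    intro k
    rw [Real.volume_Ico]
    congr 1
    field_simp
    ring
  calc ∫ t, G (∑ n ∈ S, b n * rademacher n t) ∂μ01
      = ∫ t in Set.Icc (0:ℝ) 1, G (∑ n ∈ S, b n * rademacher n t) := by
        rw [μ01]
    _ = ∫ t in Set.Ico (0:ℝ) 1, G (∑ n ∈ S, b n * rademacher n t) := by
        exact (setIntegral_congr_set Ico_ae_eq_Icc).symm
    _ = ∫ t in ⋃ k ∈ Finset.range (2^N), Set.Ico ((k:ℝ)/2^N) (((k:ℝ)+1)/2^N),
          G (∑ n ∈ S, b n * rademacher n t) := by rw [Ico_eq_biUnion N]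
    _ = ∑ k ∈ Finset.range (2^N), ∫ t in Set.Ico ((k:ℝ)/2^N) (((k:ℝ)+1)/2^N),
          G (∑ n ∈ S, b n * rademacher n t) := by
        refine integral_biUnion_finset (Finset.range (2^N))
          (fun k _ => measurableSet_Ico) ?_ ?_
        · intro k hk k' hk' hne
          simp only [Function.onFun]
          rw [Set.Ico_disjoint_Ico]
          rcases lt_or_gt_of_ne hne with h | h
          · have : ((k:ℝ)+1)/2^N ≤ (k':ℝ)/2^N := by
              apply div_le_div_of_nonneg_right ?_ h2N.le
              · exact_mod_cast Nat.succ_le_of_lt h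
            exact le_trans (min_le_left _ _) (le_trans this (le_max_right _ _))
          · have : ((k':ℝ)+1)/2^N ≤ (k:ℝ)/2^N := by
              apply div_le_div_of_nonneg_right ?_ h2N.le
              · exact_mod_cast Nat.succ_le_of_lt h
            exact le_trans (min_le_right _ _) (le_trans this (le_max_left _ _))
        · intro k hk
          rw [IntegrableOn, integrable_congr
            ((ae_restrict_iff' measurableSet_Ico).mpr (Filter.Eventually.of_forall
              (fun t ht => key k hk ht)))]
          exact integrableOn_const (by rw [hvol]; exact ENNReal.ofReal_ne_top)
    _ = ∑ k ∈ Finset.range (2^N), (2^N:ℝ)⁻¹ * G (∑ n ∈ S, b n * rho N n k) := by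
        refine Finset.sum_congr rfl fun k hk => ?_
        rw [setIntegral_congr_fun measurableSet_Ico (key k hk), setIntegral_const,
          measureReal_def, hvol, ENNReal.toReal_ofReal (by positivity), smul_eq_mul]
    _ = (2^N : ℝ)⁻¹ * ∑ k ∈ Finset.range (2^N), G (∑ n ∈ S, b n * rho N n k) := by
        rw [Finset.mul_sum]


lemma memℒp_comb (S : Finset ℕ) (b : ℕ → ℝ) (r : ℝ≥0∞) :
    MemLp (fun t => ∑ n ∈ S, b n * rademacher n t) r μ01 := by
  have hmeas : Measurable fun t => ∑ n ∈ S, b n * rademacher n t :=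
    Finset.measurable_sum S fun n _ => (measurable_rademacher n).const_mul (b n)
  refine MemLp.of_bound hmeas.aestronglyMeasurable (∑ n ∈ S, |b n|) ?_
  refine Filter.Eventually.of_forall fun t => ?_
  rw [Real.norm_eq_abs]
  calc |∑ n ∈ S, b n * rademacher n t| ≤ ∑ n ∈ S, |b n * rademacher n t| :=
        Finset.abs_sum_le_sum_abs _ _
    _ = ∑ n ∈ S, |b n| := Finset.sum_congr rfl fun n _ => by
        rw [abs_mul, abs_rademacher, mul_one]

lemma pow_cancel {a c σ : ℝ} {m : ℕ} (hm : 1 ≤ m) (ha : 0 ≤ a) (hc : 1 ≤ c) (hσ : 0 ≤ σ)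
    (h : a^(2*m) ≤ c * σ^(2*m)) : a ≤ c * σ := by
  by_contra hlt
  push_neg at hlt
  have h1 : (c*σ)^(2*m) < a^(2*m) := by
    apply pow_lt_pow_left₀ hlt (by positivity)
    omega
  have h2 : c * σ^(2*m) ≤ (c*σ)^(2*m) := by
    rw [mul_pow]
    have hcc : c ≤ c^(2*m) := le_self_pow₀ hc (by omega)
    exact mul_le_mul_of_nonneg_right hcc (by positivity)
  linarith

lemma hSN {S : Finset ℕ} (hS : ∀ n ∈ S, 1 ≤ n) :
    ∀ n ∈ S, 1 ≤ n ∧ n ≤ S.sup id :=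
  fun n hn => ⟨hS n hn, Finset.le_sup (f := id) hn⟩

theorem eLpNorm_comb_le (p : ℝ≥0∞) [Fact (1 ≤ p)]
    (S : Finset ℕ) (hS : ∀ n ∈ S, 1 ≤ n) (b : ℕ → ℝ) {m : ℕ}
    (hm : 1 ≤ m) (hpm : p ≤ ((2*m : ℕ) : ℝ≥0∞)) :
    (eLpNorm (fun t => ∑ n ∈ S, b n * rademacher n t) p μ01).toReal
      ≤ (4 * (2*m).factorial) * Real.sqrt (∑ n ∈ S, (b n)^2) := by
  set fb : ℝ → ℝ := fun t => ∑ n ∈ S, b n * rademacher n t with hfb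
  set σ2 : ℝ := ∑ n ∈ S, (b n)^2 with hσ2
  have hσ2nn : 0 ≤ σ2 := Finset.sum_nonneg fun n _ => sq_nonneg _
  set r : ℝ≥0∞ := ((2*m : ℕ) : ℝ≥0∞) with hr
  have hr0 : r ≠ 0 := by
    rw [hr]
    exact Nat.cast_ne_zero.mpr (by omega)
  have hrT : r ≠ ∞ := ENNReal.natCast_ne_top _
  have hrToReal : r.toReal = ((2*m : ℕ) : ℝ) := by simp [hr]
  have hmb := memℒp_comb S b
  -- integral moment bound
  have hint : ∫ t, |fb t|^(2*m) ∂μ01 ≤ 4 * (2*m).factorial * σ2^m := by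
    have hd := dyadic_formula (S.sup id) S (hSN hS) b (fun x => |x|^(2*m))
    rw [hfb, hd]
    have hmom := moment_le (hSN hS) b m hm
    calc (2^(S.sup id) : ℝ)⁻¹
          * ∑ k ∈ Finset.range (2^(S.sup id)), |∑ n ∈ S, b n * rho (S.sup id) n k|^(2*m)
        ≤ (2^(S.sup id) : ℝ)⁻¹ * (2^(S.sup id) * (4 * (2*m).factorial) * σ2^m) :=
          mul_le_mul_of_nonneg_left hmom (by positivity)
      _ = 4 * (2*m).factorial * σ2^m := by
          field_simp
  -- identify eLpNorm at r
  have hintnn : 0 ≤ ∫ t, |fb t|^(2*m) ∂μ01 :=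
    integral_nonneg fun t => by positivity
  have hehr : (eLpNorm fb r μ01).toReal ^ (2*m) = ∫ t, |fb t|^(2*m) ∂μ01 := by
    rw [(hmb r).eLpNorm_eq_integral_rpow_norm hr0 hrT]
    have hinteq : ∫ t, ‖fb t‖ ^ r.toReal ∂μ01 = ∫ t, |fb t|^(2*m) ∂μ01 := by
      refine integral_congr_ae (Filter.Eventually.of_forall fun t => ?_)
      simp only [hrToReal, Real.norm_eq_abs, Real.rpow_natCast]
    rw [hinteq, ENNReal.toReal_ofReal (by positivity)]
    rw [← Real.rpow_natCast ((∫ t, |fb t|^(2*m) ∂μ01) ^ r.toReal⁻¹) (2*m),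
      ← Real.rpow_mul hintnn, hrToReal,
      inv_mul_cancel₀ (by exact_mod_cast (by omega : (2*m) ≠ 0) : ((2*m:ℕ):ℝ) ≠ 0),
      Real.rpow_one]
  -- monotonicity
  have hle : (eLpNorm fb p μ01).toReal ≤ (eLpNorm fb r μ01).toReal :=
    ENNReal.toReal_mono (hmb r).eLpNorm_ne_top
      (eLpNorm_le_eLpNorm_of_exponent_le hpm (hmb p).aestronglyMeasurable)
  -- conclude
  have hfac : (1:ℝ) ≤ 4 * (2*m).factorial := by
    have : (1:ℝ) ≤ ((2*m).factorial : ℝ) := by exact_mod_cast (2*m).factorial_pos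
    linarith
  apply pow_cancel hm ENNReal.toReal_nonneg hfac (Real.sqrt_nonneg _)
  have hσpow : Real.sqrt σ2 ^ (2*m) = σ2^m := by
    rw [pow_mul, Real.sq_sqrt hσ2nn]
  rw [hσpow]
  calc (eLpNorm fb p μ01).toReal ^ (2*m)
      ≤ (eLpNorm fb r μ01).toReal ^ (2*m) :=
        pow_le_pow_left₀ ENNReal.toReal_nonneg hle _
    _ = ∫ t, |fb t|^(2*m) ∂μ01 := hehr
    _ ≤ 4 * (2*m).factorial * σ2^m := hint

theorem eLpNorm_comb_ge (p : ℝ≥0∞) [Fact (1 ≤ p)]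
    (S : Finset ℕ) (hS : ∀ n ∈ S, 1 ≤ n) (b : ℕ → ℝ) :
    Real.sqrt (∑ n ∈ S, (b n)^2) / 10
      ≤ (eLpNorm (fun t => ∑ n ∈ S, b n * rademacher n t) p μ01).toReal := by
  set fb : ℝ → ℝ := fun t => ∑ n ∈ S, b n * rademacher n t with hfb
  set σ2 : ℝ := ∑ n ∈ S, (b n)^2 with hσ2
  have hmb := memℒp_comb S b
  have hint : Real.sqrt σ2 / 10 ≤ ∫ t, |fb t| ∂μ01 := by
    have hd := dyadic_formula (S.sup id) S (hSN hS) b (fun x => |x|)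
    rw [hfb, hd]
    have := abs_lower (hSN hS) b
    calc Real.sqrt σ2 / 10
        = (2^(S.sup id) : ℝ)⁻¹ * (2^(S.sup id) * Real.sqrt σ2 / 10) := by
          field_simp
      _ ≤ (2^(S.sup id) : ℝ)⁻¹
            * ∑ k ∈ Finset.range (2^(S.sup id)), |∑ n ∈ S, b n * rho (S.sup id) n k| :=
          mul_le_mul_of_nonneg_left this (by positivity)
  have h1 : (eLpNorm fb 1 μ01).toReal = ∫ t, |fb t| ∂μ01 := by
    rw [(hmb 1).eLpNorm_eq_integral_rpow_norm one_ne_zero ENNReal.one_ne_top]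
    simp only [ENNReal.toReal_one, Real.rpow_one, inv_one]
    rw [ENNReal.toReal_ofReal (integral_nonneg fun t => norm_nonneg _)]
    refine integral_congr_ae (Filter.Eventually.of_forall fun t => ?_)
    simp [Real.norm_eq_abs, hfb]
  have hle : (eLpNorm fb 1 μ01).toReal ≤ (eLpNorm fb p μ01).toReal :=
    ENNReal.toReal_mono (hmb p).eLpNorm_ne_top
      (eLpNorm_le_eLpNorm_of_exponent_le Fact.out (hmb 1).aestronglyMeasurable)
  linarith [h1 ▸ hle]


variable (p : ℝ≥0∞) [Fact (1 ≤ p)]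

lemma memℒp_rademacher (n : ℕ) : MemLp (rademacher n) p μ01 := by
  refine MemLp.of_bound (measurable_rademacher n).aestronglyMeasurable 1
    (Filter.Eventually.of_forall fun t => ?_)
  rw [Real.norm_eq_abs, abs_rademacher]

/-- The `n`-th Rademacher function as an element of `L_p`. -/
noncomputable def g (n : ℕ) : Lp ℝ p μ01 :=
  (memℒp_rademacher p n).toLp (rademacher n)

lemma coeFn_comb (S : Finset ℕ) (b : ℕ → ℝ) :
    ⇑(∑ n ∈ S, b n • g p n) =ᵐ[μ01] fun t => ∑ n ∈ S, b n * rademacher n t := by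
  classical
  induction S using Finset.induction_on with
  | empty =>
    simp only [Finset.sum_empty]
    exact (Lp.coeFn_zero ℝ p μ01).trans (Filter.Eventually.of_forall fun t => rfl)
  | insert a s hnotmem ih =>
    rw [Finset.sum_insert hnotmem]
    have h1 := Lp.coeFn_add (b a • g p a) (∑ n ∈ s, b n • g p n)
    have h2 := Lp.coeFn_smul (b a) (g p a)
    have h3 : ⇑(g p a) =ᶠ[ae μ01] rademacher a := (memℒp_rademacher p a).coeFn_toLp
    filter_upwards [h1, h2, h3, ih] with t ht1 ht2 ht3 ht4
    rw [Finset.sum_insert hnotmem, ht1]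
    simp only [Pi.add_apply]
    rw [ht2]
    simp only [Pi.smul_apply, smul_eq_mul]
    rw [ht4, ht3]

lemma norm_comb_eq (S : Finset ℕ) (b : ℕ → ℝ) :
    ‖∑ n ∈ S, b n • g p n‖
      = (eLpNorm (fun t => ∑ n ∈ S, b n * rademacher n t) p μ01).toReal := by
  rw [Lp.norm_def]
  congr 1
  exact eLpNorm_congr_ae (coeFn_comb p S b)

/-- The normalized block vectors. -/
noncomputable def hblock (K j : ℕ) : Lp ℝ p μ01 :=
  ∑ n ∈ Finset.Icc (j*K+1) (j*K+K), (Real.sqrt K)⁻¹ • g p n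

lemma block_disjoint {K : ℕ} (hK : 1 ≤ K) :
    ∀ j j' : ℕ, j ≠ j' →
      Disjoint (Finset.Icc (j*K+1) (j*K+K)) (Finset.Icc (j'*K+1) (j'*K+K)) := by
  intro j j' hne
  rw [Finset.disjoint_left]
  intro n hn hn'
  rw [Finset.mem_Icc] at hn hn'
  rcases lt_or_gt_of_ne hne with h | h
  · have h1 : (j+1)*K ≤ j'*K := Nat.mul_le_mul_right K h
    have h2 : (j+1)*K = j*K + K := by ring
    omega
  · have h1 : (j'+1)*K ≤ j*K := Nat.mul_le_mul_right K h
    have h2 : (j'+1)*K = j'*K + K := by ring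
    omega

lemma mem_block_div {K j n : ℕ} (hK : 1 ≤ K) (hn : n ∈ Finset.Icc (j*K+1) (j*K+K)) :
    (n-1)/K = j := by
  rw [Finset.mem_Icc] at hn
  apply Nat.div_eq_of_lt_le
  · omega
  · have : (j+1)*K = j*K + K := by ring
    omega

lemma block_sum_eq (K : ℕ) (hK : 1 ≤ K) (F : Finset ℕ) (x : ℕ → ℝ) :
    ∑ j ∈ F, x j • hblock p K j
      = ∑ n ∈ F.biUnion (fun j => Finset.Icc (j*K+1) (j*K+K)),
          (x ((n-1)/K) * (Real.sqrt K)⁻¹) • g p n := by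
  rw [Finset.sum_biUnion]
  · refine Finset.sum_congr rfl fun j hj => ?_
    rw [hblock, Finset.smul_sum]
    refine Finset.sum_congr rfl fun n hn => ?_
    rw [smul_smul, mem_block_div hK hn]
  · intro j _ j' _ hne
    exact block_disjoint hK j j' hne

lemma block_coeff_sq (K : ℕ) (hK : 1 ≤ K) (F : Finset ℕ) (x : ℕ → ℝ) :
    ∑ n ∈ F.biUnion (fun j => Finset.Icc (j*K+1) (j*K+K)),
        (x ((n-1)/K) * (Real.sqrt K)⁻¹)^2 = ∑ j ∈ F, (x j)^2 := by
  rw [Finset.sum_biUnion]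
  · refine Finset.sum_congr rfl fun j hj => ?_
    have hcongr : ∀ n ∈ Finset.Icc (j*K+1) (j*K+K),
        (x ((n-1)/K) * (Real.sqrt K)⁻¹)^2 = (x j)^2 * (K:ℝ)⁻¹ := by
      intro n hn
      rw [mem_block_div hK hn, mul_pow]
      congr 1
      rw [← Real.sqrt_inv, Real.sq_sqrt (by positivity)]
    rw [Finset.sum_congr rfl hcongr, Finset.sum_const, Nat.card_Icc]
    have hcard : j*K + K + 1 - (j*K+1) = K := by omega
    rw [hcard, nsmul_eq_mul]
    have hKpos : (0:ℝ) < K := by exact_mod_cast hK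
    field_simp
  · intro j _ j' _ hne
    exact block_disjoint hK j j' hne

lemma block_mem_one_le {K : ℕ} (F : Finset ℕ) :
    ∀ n ∈ F.biUnion (fun j => Finset.Icc (j*K+1) (j*K+K)), 1 ≤ n := by
  intro n hn
  rw [Finset.mem_biUnion] at hn
  obtain ⟨j, _, hj⟩ := hn
  rw [Finset.mem_Icc] at hj
  omega

lemma block_norm_le (K : ℕ) (hK : 1 ≤ K) (F : Finset ℕ) (x : ℕ → ℝ) {m : ℕ}
    (hm : 1 ≤ m) (hpm : p ≤ ((2*m : ℕ) : ℝ≥0∞)) :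
    ‖∑ j ∈ F, x j • hblock p K j‖
      ≤ (4 * (2*m).factorial) * Real.sqrt (∑ j ∈ F, (x j)^2) := by
  rw [block_sum_eq p K hK F x, norm_comb_eq, ← block_coeff_sq K hK F x]
  exact eLpNorm_comb_le p _ (block_mem_one_le F) _ hm hpm

lemma block_norm_ge (K : ℕ) (hK : 1 ≤ K) (F : Finset ℕ) (x : ℕ → ℝ) :
    Real.sqrt (∑ j ∈ F, (x j)^2) / 10 ≤ ‖∑ j ∈ F, x j • hblock p K j‖ := by
  rw [block_sum_eq p K hK F x, norm_comb_eq, ← block_coeff_sq K hK F x]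
  exact eLpNorm_comb_ge p _ (block_mem_one_le F) _


lemma lp2_hasSum (x : lp (fun _ : ℕ => ℝ) 2) :
    HasSum (fun j => (x j)^2) (‖x‖^2) := by
  have h := lp.hasSum_norm (p := 2) (E := fun _ : ℕ => ℝ) (by norm_num) x
  have key : ∀ a : ℝ, a ^ ((2:ℝ≥0∞).toReal) = a^2 := by
    intro a
    rw [show ((2:ℝ≥0∞).toReal) = ((2:ℕ):ℝ) by norm_num, Real.rpow_natCast]
  convert h using 1
  · funext j
    rw [key, Real.norm_eq_abs, sq_abs]
  · rw [key]


lemma Jsummable (K : ℕ) (hK : 1 ≤ K) {m : ℕ} (hm : 1 ≤ m)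
    (hpm : p ≤ ((2*m : ℕ) : ℝ≥0∞)) (x : lp (fun _ : ℕ => ℝ) 2) :
    Summable fun j => x j • hblock p K j := by
  set Bp : ℝ := 4 * (2*m).factorial with hBpdef
  have hBp : 0 < Bp := by positivity
  rw [summable_iff_vanishing]
  intro e he
  obtain ⟨ε, hε, hball⟩ := Metric.mem_nhds_iff.mp he
  have hsq : Summable fun j => (x j)^2 := (lp2_hasSum x).summable
  obtain ⟨s, hs⟩ := summable_iff_vanishing.mp hsq (Metric.ball 0 ((ε/Bp)^2))
    (Metric.ball_mem_nhds 0 (by positivity))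
  refine ⟨s, fun t ht => ?_⟩
  apply hball
  rw [Metric.mem_ball, dist_zero_right]
  have h2 := hs t ht
  rw [Metric.mem_ball, dist_zero_right, Real.norm_eq_abs] at h2
  have h3 : ∑ j ∈ t, (x j)^2 < (ε/Bp)^2 := lt_of_abs_lt h2
  have h4 : Real.sqrt (∑ j ∈ t, (x j)^2) < ε/Bp := by
    calc Real.sqrt (∑ j ∈ t, (x j)^2) < Real.sqrt ((ε/Bp)^2) :=
          Real.sqrt_lt_sqrt (Finset.sum_nonneg fun j _ => sq_nonneg _) h3
      _ = ε/Bp := Real.sqrt_sq (by positivity)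
  calc ‖∑ j ∈ t, x j • hblock p K j‖ ≤ Bp * Real.sqrt (∑ j ∈ t, (x j)^2) :=
        block_norm_le p K hK t x hm hpm
    _ < Bp * (ε/Bp) := by
        apply mul_lt_mul_of_pos_left h4 hBp
    _ = ε := by field_simp

/-- The block operator `ℓ₂ → L_p`. -/
noncomputable def JCLM (K : ℕ) (hK : 1 ≤ K) {m : ℕ} (hm : 1 ≤ m)
    (hpm : p ≤ ((2*m : ℕ) : ℝ≥0∞)) : lp (fun _ : ℕ => ℝ) 2 →L[ℝ] Lp ℝ p μ01 :=
  LinearMap.mkContinuous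
    { toFun := fun x => ∑' j, x j • hblock p K j
      map_add' := by
        intro x y
        have hx := Jsummable p K hK hm hpm x
        have hy := Jsummable p K hK hm hpm y
        have h1 : ∀ j, (x + y) j • hblock p K j
            = x j • hblock p K j + y j • hblock p K j := by
          intro j
          rw [lp.coeFn_add, Pi.add_apply, add_smul]
        show (∑' (j : ℕ), (x + y) j • hblock p K j)
          = (∑' (j : ℕ), x j • hblock p K j) + ∑' (j : ℕ), y j • hblock p K j
        rw [tsum_congr h1, Summable.tsum_add hx hy]
      map_smul' := by
        intro c x
        simp only [RingHom.id_apply]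
        have hx := Jsummable p K hK hm hpm x
        have h1 : ∀ j, (c • x) j • hblock p K j = c • (x j • hblock p K j) := by
          intro j
          rw [lp.coeFn_smul, Pi.smul_apply, smul_smul, smul_eq_mul]
        show (∑' (j : ℕ), (c • x) j • hblock p K j)
          = c • ∑' (j : ℕ), x j • hblock p K j
        rw [tsum_congr h1, (hx.hasSum.const_smul c).tsum_eq] }
    (4 * (2*m).factorial)
    (by
      intro x
      have hx := (Jsummable p K hK hm hpm x).hasSum
      simp only [LinearMap.coe_mk, AddHom.coe_mk]
      refine le_of_tendsto (Filter.Tendsto.norm hx) (Filter.Eventually.of_forall fun F => ?_)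
      calc ‖∑ j ∈ F, x j • hblock p K j‖
          ≤ (4 * (2*m).factorial) * Real.sqrt (∑ j ∈ F, (x j)^2) :=
            block_norm_le p K hK F x hm hpm
        _ ≤ (4 * (2*m).factorial) * ‖x‖ := by
            apply mul_le_mul_of_nonneg_left ?_ (by positivity)
            have h1 : ∑ j ∈ F, (x j)^2 ≤ ‖x‖^2 :=
              sum_le_hasSum F (fun j _ => sq_nonneg _) (lp2_hasSum x)
            calc Real.sqrt (∑ j ∈ F, (x j)^2) ≤ Real.sqrt (‖x‖^2) :=
                  Real.sqrt_le_sqrt h1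
              _ = ‖x‖ := Real.sqrt_sq (norm_nonneg x))

lemma JCLM_apply (K : ℕ) (hK : 1 ≤ K) {m : ℕ} (hm : 1 ≤ m)
    (hpm : p ≤ ((2*m : ℕ) : ℝ≥0∞)) (x : lp (fun _ : ℕ => ℝ) 2) :
    JCLM p K hK hm hpm x = ∑' j, x j • hblock p K j := rfl

lemma JCLM_ge (K : ℕ) (hK : 1 ≤ K) {m : ℕ} (hm : 1 ≤ m)
    (hpm : p ≤ ((2*m : ℕ) : ℝ≥0∞)) (x : lp (fun _ : ℕ => ℝ) 2) :
    ‖x‖ / 10 ≤ ‖JCLM p K hK hm hpm x‖ := by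
  have hx := (Jsummable p K hK hm hpm x).hasSum
  have h1 : Tendsto (fun F : Finset ℕ => Real.sqrt (∑ j ∈ F, (x j)^2) / 10) atTop
      (𝓝 (Real.sqrt (‖x‖^2) / 10)) :=
    (((Real.continuous_sqrt.tendsto _).comp (lp2_hasSum x))).div_const 10
  have h2 := Filter.Tendsto.norm hx
  have hle := le_of_tendsto_of_tendsto' h1 h2 (fun F => block_norm_ge p K hK F x)
  rwa [Real.sqrt_sq (norm_nonneg x)] at hle


end RadAux

open RadAux in
/-- If `1 < p < ∞`, `X` is a Banach space and `T : L_p[0,1] → X` is a bounded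
`ℓ₂`-strictly singular operator, then for all `ε, δ > 0` there are `N` and reals
`b_1, …, b_N` with `max |b_n| ≤ ε` such that `f = ∑_{n=1}^N b_n r_n` satisfies
`‖f‖_p = 1` and `‖T f‖ < δ`. -/
theorem l2_strictly_singular_small_rademacher_combination
    {X : Type*} [NormedAddCommGroup X] [NormedSpace ℝ X] [CompleteSpace X]
    (p : ℝ≥0∞) [Fact (1 ≤ p)] (hp1 : 1 < p) (hp2 : p ≠ ∞)
    (T : Lp ℝ p μ01 →L[ℝ] X) (hT : IsL2StrictlySingular T)
    (ε δ : ℝ) (hε : 0 < ε) (hδ : 0 < δ) :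
    ∃ (N : ℕ) (b : ℕ → ℝ),
      (∀ n ∈ Finset.Icc 1 N, |b n| ≤ ε) ∧
      ∃ f : Lp ℝ p μ01,
        (⇑f =ᵐ[μ01] fun t => ∑ n ∈ Finset.Icc 1 N, b n * rademacher n t) ∧
        ‖f‖ = 1 ∧ ‖T f‖ < δ := by

  classical
  -- choose the even exponent 2m dominating p
  set m : ℕ := ⌈p.toReal⌉₊ + 1 with hmdef
  have hm1 : 1 ≤ m := by omega
  have hpm : p ≤ ((2*m : ℕ) : ℝ≥0∞) := by
    conv_lhs => rw [← ENNReal.ofReal_toReal hp2]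
    refine ENNReal.ofReal_le_of_le_toReal ?_
    have h1 : ((2*m : ℕ) : ℝ≥0∞).toReal = ((2*m : ℕ) : ℝ) := by simp
    rw [h1]
    have h2 := Nat.le_ceil p.toReal
    have h3 : (⌈p.toReal⌉₊ : ℝ) ≤ ((2*m : ℕ) : ℝ) := by
      push_cast [hmdef]
      have : (0:ℝ) ≤ (⌈p.toReal⌉₊ : ℝ) := by positivity
      linarith
    linarith
  -- choose the block length K
  set K : ℕ := ⌈(20/ε)^2⌉₊ + 1 with hKdef
  have hK : 1 ≤ K := by omega
  have hKpos : (0:ℝ) < K := by exact_mod_cast hK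
  have hsKpos : 0 < Real.sqrt K := Real.sqrt_pos.mpr hKpos
  have hKε : 20 / Real.sqrt K ≤ ε := by
    have h1 : ((20:ℝ)/ε)^2 ≤ (K:ℝ) := by
      calc ((20:ℝ)/ε)^2 ≤ (⌈(20/ε)^2⌉₊ : ℝ) := Nat.le_ceil _
        _ ≤ (K:ℝ) := by exact_mod_cast Nat.le_succ _
    have h2 : 20/ε ≤ Real.sqrt K := by
      rw [show (20/ε) = Real.sqrt ((20/ε)^2) from (Real.sqrt_sq (by positivity)).symm]
      exact Real.sqrt_le_sqrt h1
    rw [div_le_iff₀ hsKpos]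
    rw [div_le_iff₀ hε] at h2
    nlinarith
  set J := JCLM p K hK hm1 hpm with hJdef
  -- the closed subspace
  have hanti : AntilipschitzWith 10 J := by
    refine J.antilipschitz_of_bound (K := 10) fun x => ?_
    have := JCLM_ge p K hK hm1 hpm x
    rw [← hJdef] at this
    have h10 : ((10 : ℝ≥0) : ℝ) = 10 := by norm_num
    rw [h10]
    linarith
  set Y : Submodule ℝ (Lp ℝ p μ01) := LinearMap.range (J : lp (fun _ : ℕ => ℝ) 2 →ₗ[ℝ] Lp ℝ p μ01) with hYdef
  have hYclosed : IsClosed (Y : Set (Lp ℝ p μ01)) := by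
    have h1 := hanti.isClosed_range J.uniformContinuous
    have h2 : (Y : Set (Lp ℝ p μ01)) = Set.range J := by
      rw [hYdef]
      ext z
      simp [LinearMap.mem_range]
    rwa [h2]
  haveI : CompleteSpace Y := hYclosed.completeSpace_coe
  set Jr : lp (fun _ : ℕ => ℝ) 2 →L[ℝ] Y :=
    J.codRestrict Y (fun x => LinearMap.mem_range_self (J : lp (fun _ : ℕ => ℝ) 2 →ₗ[ℝ] Lp ℝ p μ01) x) with hJr
  have hker : LinearMap.ker (Jr : lp (fun _ : ℕ => ℝ) 2 →ₗ[ℝ] Y) = ⊥ := by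
    rw [hJr, ContinuousLinearMap.ker_codRestrict]
    exact LinearMap.ker_eq_bot.mpr hanti.injective
  have hsurj : LinearMap.range (Jr : lp (fun _ : ℕ => ℝ) 2 →ₗ[ℝ] Y) = ⊤ := by
    rw [Submodule.eq_top_iff']
    rintro ⟨y, hy⟩
    obtain ⟨x, hx⟩ := LinearMap.mem_range.mp hy
    refine ⟨x, ?_⟩
    apply Subtype.ext
    simpa [hJr] using hx
  have hequiv : Nonempty (lp (fun _ : ℕ => ℝ) 2 ≃L[ℝ] Y) :=
    ⟨ContinuousLinearEquiv.ofBijective Jr hker hsurj⟩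
  -- apply strict singularity
  have hmain : ∃ y ∈ Y, ‖y‖ = 1 ∧ ‖T y‖ < δ/8 := by
    by_contra hcon
    push_neg at hcon
    exact hT ⟨Y, hYclosed, hequiv, δ/8, by positivity, hcon⟩
  obtain ⟨y, hyY, hy1, hTy⟩ := hmain
  obtain ⟨x, hx⟩ := LinearMap.mem_range.mp hyY
  rw [ContinuousLinearMap.coe_coe] at hx
  have hx10 : ‖x‖ ≤ 10 := by
    have h := JCLM_ge p K hK hm1 hpm x
    rw [← hJdef, hx, hy1] at h
    linarith
  have hxj : ∀ j, |x j| ≤ 10 := by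
    intro j
    have h := lp.norm_apply_le_norm (by norm_num : (2:ℝ≥0∞) ≠ 0) x j
    rw [Real.norm_eq_abs] at h
    linarith
  -- approximation parameter
  set η : ℝ := min (1/2) (δ/(8*(‖T‖+1))) with hηdef
  have hηpos : 0 < η := lt_min (by norm_num) (by positivity)
  have hηhalf : η ≤ 1/2 := min_le_left _ _
  have hηT : ‖T‖ * η ≤ δ/8 := by
    have h1 : η ≤ δ/(8*(‖T‖+1)) := min_le_right _ _
    have h2 : ‖T‖ * η ≤ ‖T‖ * (δ/(8*(‖T‖+1))) :=
      mul_le_mul_of_nonneg_left h1 (norm_nonneg _)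
    have hw : (0:ℝ) ≤ δ/(8*(‖T‖+1)) := by positivity
    have hwc : δ/(8*(‖T‖+1)) * (8*(‖T‖+1)) = δ :=
      div_mul_cancel₀ δ (by positivity)
    nlinarith [norm_nonneg T]
  -- a finite partial sum close to y
  have hhs : HasSum (fun j => x j • hblock p K j) y := by
    have h := (Jsummable p K hK hm1 hpm x).hasSum
    have h2 : (∑' j, x j • hblock p K j) = y := by
      rw [← JCLM_apply p K hK hm1 hpm x, ← hJdef, hx]
    rwa [h2] at h
  have hev : ∀ᶠ F in (atTop : Filter (Finset ℕ)),
      (∑ j ∈ F, x j • hblock p K j) ∈ Metric.ball y η :=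
    hhs (Metric.ball_mem_nhds y hηpos)
  obtain ⟨F, hF⟩ := hev.exists
  set f0 : Lp ℝ p μ01 := ∑ j ∈ F, x j • hblock p K j with hf0def
  have hf0y : ‖f0 - y‖ < η := by
    rw [← dist_eq_norm]
    exact Metric.mem_ball.mp hF
  have hf0n : 1 - η ≤ ‖f0‖ := by
    have h2 : ‖y‖ - ‖f0‖ ≤ ‖f0 - y‖ := by
      rw [norm_sub_rev]
      exact norm_sub_norm_le y f0
    rw [hy1] at h2
    linarith
  have hf0pos : 0 < ‖f0‖ := by linarith
  have hf0inv : ‖f0‖⁻¹ ≤ 2 := by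
    rw [inv_le_comm₀ hf0pos (by norm_num : (0:ℝ) < 2)]
    linarith
  -- the final coefficients
  set U : Finset ℕ := F.biUnion (fun j => Finset.Icc (j*K+1) (j*K+K)) with hUdef
  set Nmax : ℕ := (F.sup id) * K + K with hNmaxdef
  have hUsub : U ⊆ Finset.Icc 1 Nmax := by
    intro n hn
    rw [hUdef, Finset.mem_biUnion] at hn
    obtain ⟨j, hj, hjn⟩ := hn
    rw [Finset.mem_Icc] at hjn ⊢
    have hjle : j ≤ F.sup id := Finset.le_sup (f := id) hj
    have : j * K ≤ (F.sup id) * K := Nat.mul_le_mul_right K hjle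
    omega
  set c0 : ℝ := ‖f0‖⁻¹ with hc0def
  have hc0pos : 0 < c0 := by rw [hc0def]; exact inv_pos.mpr hf0pos
  set cb : ℕ → ℝ := fun n => x ((n-1)/K) * (Real.sqrt K)⁻¹ with hcbdef
  set bfin : ℕ → ℝ := fun n => c0 * (if n ∈ U then cb n else 0) with hbfindef
  set f : Lp ℝ p μ01 := c0 • f0 with hfdef
  have hf0block : f0 = ∑ n ∈ U, cb n • g p n := by
    rw [hf0def, block_sum_eq p K hK F x, hUdef, hcbdef]
  have hfeq : f = ∑ n ∈ Finset.Icc 1 Nmax, bfin n • g p n := by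
    rw [hfdef, hf0block, Finset.smul_sum]
    rw [← Finset.sum_subset hUsub (fun n _ hnotU => by
      rw [hbfindef]
      simp [if_neg hnotU])]
    refine Finset.sum_congr rfl fun n hn => ?_
    rw [smul_smul, hbfindef]
    simp only [if_pos hn]
  have hcoe : ⇑f =ᵐ[μ01] fun t => ∑ n ∈ Finset.Icc 1 Nmax, bfin n * rademacher n t := by
    rw [hfeq]
    exact coeFn_comb p _ bfin
  have hnormf : ‖f‖ = 1 := by
    rw [hfdef, norm_smul, Real.norm_eq_abs, abs_of_pos hc0pos, hc0def,
      inv_mul_cancel₀ hf0pos.ne']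
  have hTf : ‖T f‖ < δ := by
    have h1 : T f = c0 • T f0 := by rw [hfdef, T.map_smul]
    have h2 : ‖T f0‖ ≤ ‖T y‖ + ‖T‖ * η := by
      have e1 : T f0 = T y + T (f0 - y) := by
        rw [← map_add]
        congr 1
        abel
      calc ‖T f0‖ = ‖T y + T (f0 - y)‖ := by rw [e1]
        _ ≤ ‖T y‖ + ‖T (f0 - y)‖ := norm_add_le _ _
        _ ≤ ‖T y‖ + ‖T‖ * ‖f0 - y‖ := by linarith [T.le_opNorm (f0 - y)]
        _ ≤ ‖T y‖ + ‖T‖ * η := by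
            have := mul_le_mul_of_nonneg_left hf0y.le (norm_nonneg T)
            linarith
    rw [h1, norm_smul, Real.norm_eq_abs, abs_of_pos hc0pos]
    have h3 : ‖T f0‖ ≤ δ/4 := by linarith
    have hc02 : c0 ≤ 2 := by rw [hc0def]; exact hf0inv
    calc c0 * ‖T f0‖ ≤ 2 * (δ/4) :=
          mul_le_mul hc02 h3 (norm_nonneg _) (by norm_num)
      _ < δ := by linarith
  have hsKinv : (0:ℝ) < (Real.sqrt K)⁻¹ := inv_pos.mpr hsKpos
  have hcoeff : ∀ n ∈ Finset.Icc 1 Nmax, |bfin n| ≤ ε := by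
    intro n _
    have hbv : bfin n = c0 * (if n ∈ U then cb n else 0) := by rw [hbfindef]
    rw [hbv, abs_mul]
    have hc0abs : |c0| ≤ 2 := by
      rw [abs_of_pos hc0pos, hc0def]
      exact hf0inv
    by_cases hnU : n ∈ U
    · rw [if_pos hnU]
      have hcbv : cb n = x ((n-1)/K) * (Real.sqrt K)⁻¹ := by rw [hcbdef]
      rw [hcbv, abs_mul, abs_of_pos hsKinv]
      have h1 : |x ((n-1)/K)| ≤ 10 := hxj _
      have h2 : |x ((n-1)/K)| * (Real.sqrt K)⁻¹ ≤ 10 * (Real.sqrt K)⁻¹ :=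
        mul_le_mul_of_nonneg_right h1 hsKinv.le
      calc |c0| * (|x ((n-1)/K)| * (Real.sqrt K)⁻¹) ≤ 2 * (10 * (Real.sqrt K)⁻¹) :=
            mul_le_mul hc0abs h2 (by positivity) (by norm_num)
        _ = 20 / Real.sqrt K := by ring
        _ ≤ ε := hKε
    · rw [if_neg hnU]
      simp only [abs_zero, mul_zero]
      linarith
  exact ⟨Nmax, bfin, hcoeff, f, hcoe, hnormf, hTf⟩
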